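/- Let M₁, M₂, …, M_m and T be square nonnegative real matrices of the same size, each nonzero, with every M_ℓ (1 ≤ ℓ ≤ m) subrectangular, and let x, y be nonnegative nonzero vectors. Write x̃ᵀ = xᵀ·M₁, ỹᵀ = yᵀ·M₁, and M₁^m = M₁·M₂⋯M_m. If ‖xᵀ·M₁^m·T‖₁ > 0 and ‖yᵀ·M₁^m·T‖₁ > 0, then ln( (‖xᵀ·M₁^m·T‖₁ / ‖yᵀ·M₁^m·T‖₁) · (‖yᵀ·M₁^m‖₁ / ‖xᵀ·M₁^m‖₁) ) ≤ d(x̃, ỹ) · ∏_{ℓ=2}^{m} τ(M_ℓ). -/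

import Mathlib

/-- A nonnegative matrix is *subrectangular* if `M i j ≠ 0` and `M k l ≠ 0` imply
`M i l ≠ 0` and `M k j ≠ 0`. -/
def Subrectangular {m n : Type*} (M : Matrix m n ℝ) : Prop :=
  ∀ i j k l, M i j ≠ 0 → M k l ≠ 0 → M i l ≠ 0 ∧ M k j ≠ 0

/-- The projective distance `d(x,y) = ln max_{j,l ∈ supp x} (x_j/y_j)/(x_l/y_l)`, with the
convention that `d = 0` when the support is empty (`sSup ∅ = 0` and `log 0 = 0`). -/
noncomputable def projDist {n : Type*} (x y : n → ℝ) : ℝ :=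
  Real.log (sSup {r : ℝ | ∃ j, x j ≠ 0 ∧ ∃ l, x l ≠ 0 ∧ r = (x j / y j) / (x l / y l)})

/-- `φ(M)`: minimum of `(M i j · M k l)/(M i l · M k j)` over nonzero rows `i, k` and
nonzero columns `j, l` of `M`. -/
noncomputable def phi {m n : Type*} (M : Matrix m n ℝ) : ℝ :=
  sInf {r : ℝ | ∃ i k j l,
    (∃ j', M i j' ≠ 0) ∧ (∃ j', M k j' ≠ 0) ∧ (∃ i', M i' j ≠ 0) ∧ (∃ i', M i' l ≠ 0) ∧
    r = (M i j * M k l) / (M i l * M k j)}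

/-- The Birkhoff contraction coefficient `τ(M) = (1 − √φ(M))/(1 + √φ(M))`. -/
noncomputable def tau {m n : Type*} (M : Matrix m n ℝ) : ℝ :=
  (1 - Real.sqrt (phi M)) / (1 + Real.sqrt (phi M))

/-- The ordered product `M₁ · M₂ ⋯ M_s` of a sequence of square matrices. -/
def prodSeq {n : Type*} [Fintype n] [DecidableEq n]
    (M : ℕ → Matrix n n ℝ) (s : ℕ) : Matrix n n ℝ :=
  ((List.range s).map fun ℓ => M (ℓ + 1)).prod

section Aux
variable {n : Type*} [Fintype n]

private lemma bracketIneq (δ f x y z w : ℝ) (hδ : 1 ≤ δ) (hf0 : 0 < f) (hf1 : f ≤ 1)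
    (hx : 0 ≤ x) (hy : 0 ≤ y) (hz : 0 ≤ z) (hw : 0 ≤ w)
    (hxy : x * y = z * w) (hzw : f^2 * w ≤ z) :
    0 ≤ (1-f^2)*x + (1-f^2)*δ^2*y + (δ^2+2*δ*f+1)*z - (2*δ*f+f^2+δ^2*f^2)*w := by
  have hf2 : (0:ℝ) ≤ 1 - f^2 := by nlinarith
  rcases le_or_gt ((2*δ*f+f^2+δ^2*f^2)*w) ((δ^2+2*δ*f+1)*z) with h | h
  · have h1 : 0 ≤ (1-f^2)*x := mul_nonneg hf2 hx
    have h2 : 0 ≤ (1-f^2)*δ^2*y := mul_nonneg (mul_nonneg hf2 (sq_nonneg δ)) hy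
    linarith
  · have hCfE : (δ^2+2*δ*f+1) * f^2 ≤ (2*δ*f+f^2+δ^2*f^2) := by
      nlinarith [mul_nonneg (mul_nonneg (by linarith : (0:ℝ) ≤ δ) hf0.le) hf2]
    have h3 : (δ^2+2*δ*f+1)^2*f^2*z ≤ (2*δ*f+f^2+δ^2*f^2)^2*w := by
      have e1 : ((δ^2+2*δ*f+1)*f^2) * ((δ^2+2*δ*f+1)*z) ≤ ((δ^2+2*δ*f+1)*f^2) * ((2*δ*f+f^2+δ^2*f^2)*w) :=
        mul_le_mul_of_nonneg_left h.le (by positivity)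
      have e2 : ((δ^2+2*δ*f+1)*f^2) * ((2*δ*f+f^2+δ^2*f^2)*w) ≤ (2*δ*f+f^2+δ^2*f^2) * ((2*δ*f+f^2+δ^2*f^2)*w) :=
        mul_le_mul_of_nonneg_right hCfE (by positivity)
      nlinarith [e1, e2]
    have hkey : ((2*δ*f+f^2+δ^2*f^2)*w - (δ^2+2*δ*f+1)*z)^2 ≤ 4*(1-f^2)^2*δ^2*(z*w) := by
      have h4 : 0 ≤ (z - f^2*w) * ((2*δ*f+f^2+δ^2*f^2)^2*w - (δ^2+2*δ*f+1)^2*f^2*z) :=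
        mul_nonneg (by linarith) (by linarith)
      have hid2 : (z - f^2*w) * ((2*δ*f+f^2+δ^2*f^2)^2*w - (δ^2+2*δ*f+1)^2*f^2*z)
          = f^2 * (4*(1-f^2)^2*δ^2*(z*w) - ((2*δ*f+f^2+δ^2*f^2)*w - (δ^2+2*δ*f+1)*z)^2) := by
        ring
      rw [hid2] at h4
      have := (mul_nonneg_iff_of_pos_left (by positivity : (0:ℝ) < f^2)).mp h4
      linarith
    have hkey2 : ((2*δ*f+f^2+δ^2*f^2)*w - (δ^2+2*δ*f+1)*z)^2 ≤ ((1-f^2)*x + (1-f^2)*δ^2*y)^2 := by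
      have h5 : 4*(1-f^2)^2*δ^2*(z*w) ≤ ((1-f^2)*x + (1-f^2)*δ^2*y)^2 := by
        rw [← hxy]; nlinarith [sq_nonneg ((1-f^2)*x - (1-f^2)*δ^2*y)]
      linarith
    have h6 : 0 ≤ (1-f^2)*x + (1-f^2)*δ^2*y := by
      have := mul_nonneg hf2 hx
      have := mul_nonneg (mul_nonneg hf2 (sq_nonneg δ)) hy
      linarith
    have h7 : (2*δ*f+f^2+δ^2*f^2)*w - (δ^2+2*δ*f+1)*z ≤ (1-f^2)*x + (1-f^2)*δ^2*y := by
      calc (2*δ*f+f^2+δ^2*f^2)*w - (δ^2+2*δ*f+1)*z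
          ≤ |(2*δ*f+f^2+δ^2*f^2)*w - (δ^2+2*δ*f+1)*z| := le_abs_self _
        _ = Real.sqrt (((2*δ*f+f^2+δ^2*f^2)*w - (δ^2+2*δ*f+1)*z)^2) := (Real.sqrt_sq_eq_abs _).symm
        _ ≤ Real.sqrt (((1-f^2)*x + (1-f^2)*δ^2*y)^2) := Real.sqrt_le_sqrt hkey2
        _ = (1-f^2)*x + (1-f^2)*δ^2*y := Real.sqrt_sq h6
    linarith

private lemma polyIneq (δ f a b c d : ℝ) (hδ : 1 ≤ δ) (hf0 : 0 < f) (hf1 : f ≤ 1)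
    (ha : 0 ≤ a) (hb : 0 ≤ b) (hc : 0 ≤ c) (hd : 0 ≤ d)
    (hcross : f^2 * (b*c) ≤ a*d) :
    (a + δ^2*b) * (c + d) * (1 + δ*f)^2 ≤ (δ+f)^2 * (a+b) * (c + δ^2*d) := by
  have hB := bracketIneq δ f (a*c) (b*d) (a*d) (b*c) hδ hf0 hf1
    (by positivity) (by positivity) (by positivity) (by positivity) (by ring) hcross
  have hδ2 : (0:ℝ) ≤ δ^2 - 1 := by nlinarith
  linarith [mul_nonneg hδ2 hB]

private lemma logRatioLe (f δ : ℝ) (hf0 : 0 < f) (hf1 : f ≤ 1) (hδ : 1 ≤ δ) :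
    Real.log ((δ+f)/(1+δ*f)) ≤ (1-f)/(1+f) * Real.log δ := by
  set g : ℝ → ℝ := fun t => (1-f)/(1+f) * Real.log t - Real.log (t+f) + Real.log (1+t*f) with hg
  have hderiv : ∀ t ∈ Set.Ici (1:ℝ),
      HasDerivAt g ((1-f)/(1+f) * t⁻¹ - 1/(t+f) + (1*f)/(1+t*f)) t := by
    intro t ht
    have ht0 : (0:ℝ) < t := lt_of_lt_of_le one_pos ht
    have h1 : HasDerivAt (fun t : ℝ => (1-f)/(1+f) * Real.log t) ((1-f)/(1+f) * t⁻¹) t :=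
      (Real.hasDerivAt_log (ne_of_gt ht0)).const_mul _
    have h2 : HasDerivAt (fun t : ℝ => Real.log (t+f)) (1/(t+f)) t :=
      ((hasDerivAt_id t).add_const f).log (by positivity)
    have h3 : HasDerivAt (fun t : ℝ => Real.log (1+t*f)) ((1*f)/(1+t*f)) t :=
      (((hasDerivAt_id t).mul_const f).const_add 1).log (by positivity)
    exact (h1.sub h2).add h3
  have hmono : MonotoneOn g (Set.Ici (1:ℝ)) := by
    apply monotoneOn_of_deriv_nonneg (convex_Ici 1)
    · exact fun t ht => (hderiv t ht).continuousAt.continuousWithinAt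
    · intro t ht
      rw [interior_Ici] at ht
      exact (hderiv t (Set.mem_Ici.mpr (le_of_lt (Set.mem_Ioi.mp ht)))).differentiableAt.differentiableWithinAt
    · intro t ht
      rw [interior_Ici] at ht
      have ht1 : (1:ℝ) < t := ht
      have ht0 : (0:ℝ) < t := lt_trans one_pos ht1
      rw [(hderiv t (le_of_lt ht1)).deriv]
      have key : (1-f)/(1+f) * t⁻¹ - 1/(t+f) + (1*f)/(1+t*f)
          = ((1-f)*f*(t-1)^2) / ((1+f)*(t*((t+f)*(1+t*f)))) := by
        field_simp
        ring
      rw [key]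
      have hnum : 0 ≤ (1-f)*f*(t-1)^2 := by
        have : (0:ℝ) ≤ 1 - f := by linarith
        positivity
      positivity
  have hg1 : g 1 = 0 := by simp [hg]
  have := hmono (Set.self_mem_Ici) (show δ ∈ Set.Ici (1:ℝ) from hδ) hδ
  rw [hg1] at this
  have hlog : Real.log ((δ+f)/(1+δ*f)) = Real.log (δ+f) - Real.log (1+δ*f) :=
    Real.log_div (by positivity) (by positivity)
  simp only [hg] at this
  linarith

/-- The set appearing in `projDist`. -/
def RSet (u v : n → ℝ) : Set ℝ :=
  {r : ℝ | ∃ j, u j ≠ 0 ∧ ∃ l, u l ≠ 0 ∧ r = (u j / v j) / (u l / v l)}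

lemma projDist_eq (u v : n → ℝ) : projDist u v = Real.log (sSup (RSet u v)) := rfl

lemma rset_finite (u v : n → ℝ) : (RSet u v).Finite := by
  apply Set.Finite.subset (Set.finite_range (fun p : n × n => (u p.1 / v p.1) / (u p.2 / v p.2)))
  rintro r ⟨j, hj, l, hl, rfl⟩; exact ⟨(j, l), rfl⟩

lemma one_mem_rset {u v : n → ℝ} (hsupp : ∀ i, u i ≠ 0 ↔ v i ≠ 0) (hune : u ≠ 0) :
    (1:ℝ) ∈ RSet u v := by
  obtain ⟨j, hj⟩ := Function.ne_iff.mp hune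
  have hvj : v j ≠ 0 := (hsupp j).mp hj
  exact ⟨j, hj, j, hj, (div_self (div_ne_zero hj hvj)).symm⟩

lemma one_le_sSup_rset {u v : n → ℝ} (hsupp : ∀ i, u i ≠ 0 ↔ v i ≠ 0) (hune : u ≠ 0) :
    1 ≤ sSup (RSet u v) :=
  le_csSup (rset_finite u v).bddAbove (one_mem_rset hsupp hune)

lemma ratio_le_sSup_rset {u v : n → ℝ} (hu : ∀ i, 0 ≤ u i) (hv : ∀ i, 0 ≤ v i)
    (hsupp : ∀ i, u i ≠ 0 ↔ v i ≠ 0) (hune : u ≠ 0) (j l : n) :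
    u j * v l ≤ sSup (RSet u v) * (v j * u l) := by
  have hD1 : 1 ≤ sSup (RSet u v) := one_le_sSup_rset hsupp hune
  by_cases hj : u j = 0
  · rw [hj, zero_mul]
    exact mul_nonneg (by linarith) (mul_nonneg (hv j) (hu l))
  · by_cases hl : u l = 0
    · have hvl : v l = 0 := by by_contra h; exact (hsupp l).mpr h hl
      rw [hvl, mul_zero]
      exact mul_nonneg (by linarith) (mul_nonneg (hv j) (hu l))
    · have hvj : v j ≠ 0 := (hsupp j).mp hj
      have hvl : v l ≠ 0 := (hsupp l).mp hl
      have hulp : 0 < u l := lt_of_le_of_ne (hu l) (Ne.symm hl)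
      have hvjp : 0 < v j := lt_of_le_of_ne (hv j) (Ne.symm hvj)
      have hvlp : 0 < v l := lt_of_le_of_ne (hv l) (Ne.symm hvl)
      have hle : (u j / v j) / (u l / v l) ≤ sSup (RSet u v) :=
        le_csSup (rset_finite u v).bddAbove ⟨j, hj, l, hl, rfl⟩
      rw [div_le_iff₀ (by positivity), div_le_iff₀ hvjp] at hle
      calc u j * v l ≤ (sSup (RSet u v) * (u l / v l) * v j) * v l :=
            mul_le_mul_of_nonneg_right hle (hv l)
        _ = sSup (RSet u v) * (v j * u l) := by field_simp

lemma vecMul_apply_eq (g : n → ℝ) (M : Matrix n n ℝ) (jj : n) :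
    Matrix.vecMul g M jj = ∑ i, g i * M i jj := by
  simp [Matrix.vecMul, dotProduct]

lemma vecMul_entry_nonneg {M : Matrix n n ℝ} (hM : ∀ i j, 0 ≤ M i j) {u : n → ℝ}
    (hu : ∀ i, 0 ≤ u i) (j : n) : 0 ≤ Matrix.vecMul u M j := by
  rw [vecMul_apply_eq]
  exact Finset.sum_nonneg fun i _ => mul_nonneg (hu i) (hM i j)

lemma supp_vecMul {M : Matrix n n ℝ} (hM : ∀ i j, 0 ≤ M i j) (hsr : Subrectangular M)
    {u : n → ℝ} (hu : ∀ i, 0 ≤ u i) (hne : Matrix.vecMul u M ≠ 0) (j : n) :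
    Matrix.vecMul u M j ≠ 0 ↔ ∃ i, M i j ≠ 0 := by
  obtain ⟨j₀, hj₀⟩ := Function.ne_iff.mp hne
  rw [vecMul_apply_eq] at hj₀
  obtain ⟨i₀, -, hi₀⟩ := Finset.exists_ne_zero_of_sum_ne_zero hj₀
  have hui₀ : u i₀ ≠ 0 := fun h => hi₀ (by rw [h, zero_mul])
  have hMi₀ : M i₀ j₀ ≠ 0 := fun h => hi₀ (by rw [h, mul_zero])
  constructor
  · intro h
    rw [vecMul_apply_eq] at h
    obtain ⟨i, -, hi⟩ := Finset.exists_ne_zero_of_sum_ne_zero h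
    exact ⟨i, fun hz => hi (by rw [hz, mul_zero])⟩
  · rintro ⟨i₁, hi₁⟩
    have hMi₀j : M i₀ j ≠ 0 := (hsr i₀ j₀ i₁ j hMi₀ hi₁).1
    rw [vecMul_apply_eq]
    have : 0 < ∑ i, u i * M i j := by
      apply Finset.sum_pos' (fun i _ => mul_nonneg (hu i) (hM i j))
      exact ⟨i₀, Finset.mem_univ _, mul_pos (lt_of_le_of_ne (hu i₀) (Ne.symm hui₀))
        (lt_of_le_of_ne (hM i₀ j) (Ne.symm hMi₀j))⟩
    exact ne_of_gt this

lemma subrect_entry {M : Matrix n n ℝ} (hsr : Subrectangular M) {i j : n}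
    (hrow : ∃ j', M i j' ≠ 0) (hcol : ∃ i', M i' j ≠ 0) : M i j ≠ 0 := by
  obtain ⟨j', hj'⟩ := hrow
  obtain ⟨i', hi'⟩ := hcol
  exact (hsr i j' i' j hj' hi').1

def PhiSet (M : Matrix n n ℝ) : Set ℝ :=
  {r : ℝ | ∃ i k j l,
    (∃ j', M i j' ≠ 0) ∧ (∃ j', M k j' ≠ 0) ∧ (∃ i', M i' j ≠ 0) ∧ (∃ i', M i' l ≠ 0) ∧
    r = (M i j * M k l) / (M i l * M k j)}

lemma phi_eq (M : Matrix n n ℝ) : phi M = sInf (PhiSet M) := rfl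

lemma phiSet_finite (M : Matrix n n ℝ) : (PhiSet M).Finite := by
  apply Set.Finite.subset (Set.finite_range
    (fun p : (n × n) × (n × n) => (M p.1.1 p.2.1 * M p.1.2 p.2.2) / (M p.1.1 p.2.2 * M p.1.2 p.2.1)))
  rintro r ⟨i, k, j, l, -, -, -, -, rfl⟩; exact ⟨((i, k), (j, l)), rfl⟩

lemma exists_entry_ne {M : Matrix n n ℝ} (hne : M ≠ 0) : ∃ i j, M i j ≠ 0 := by
  by_contra h
  push_neg at h
  exact hne (by ext i j; exact h i j)

lemma phi_pos {M : Matrix n n ℝ} (hM : ∀ i j, 0 ≤ M i j) (hsr : Subrectangular M)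
    (hne : M ≠ 0) : 0 < phi M := by
  obtain ⟨i, j, hij⟩ := exists_entry_ne hne
  have hnonempty : (PhiSet M).Nonempty :=
    ⟨_, i, i, j, j, ⟨j, hij⟩, ⟨j, hij⟩, ⟨i, hij⟩, ⟨i, hij⟩, rfl⟩
  have hmem := hnonempty.csInf_mem (phiSet_finite M)
  rw [← phi_eq] at hmem
  obtain ⟨i, k, j, l, hri, hrk, hcj, hcl, hval⟩ := hmem
  have h1 : 0 < M i j := lt_of_le_of_ne (hM i j) (Ne.symm (subrect_entry hsr hri hcj))
  have h2 : 0 < M k l := lt_of_le_of_ne (hM k l) (Ne.symm (subrect_entry hsr hrk hcl))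
  have h3 : 0 < M i l := lt_of_le_of_ne (hM i l) (Ne.symm (subrect_entry hsr hri hcl))
  have h4 : 0 < M k j := lt_of_le_of_ne (hM k j) (Ne.symm (subrect_entry hsr hrk hcj))
  rw [hval]
  positivity

lemma phi_le_one {M : Matrix n n ℝ} (hne : M ≠ 0) : phi M ≤ 1 := by
  obtain ⟨i, j, hij⟩ := exists_entry_ne hne
  have hmem : (1:ℝ) ∈ PhiSet M :=
    ⟨i, i, j, j, ⟨j, hij⟩, ⟨j, hij⟩, ⟨i, hij⟩, ⟨i, hij⟩,
      (div_self (mul_ne_zero hij hij)).symm⟩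
  exact csInf_le (phiSet_finite M).bddBelow hmem

lemma phi_mul_le {M : Matrix n n ℝ} (hM : ∀ i j, 0 ≤ M i j) (hsr : Subrectangular M)
    {i k j l : n} (hri : ∃ j', M i j' ≠ 0) (hrk : ∃ j', M k j' ≠ 0)
    (hcj : ∃ i', M i' j ≠ 0) (hcl : ∃ i', M i' l ≠ 0) :
    phi M * (M i j * M k l) ≤ M i l * M k j := by
  have hmem : (M i l * M k j) / (M i j * M k l) ∈ PhiSet M :=
    ⟨i, k, l, j, hri, hrk, hcl, hcj, rfl⟩
  have hle : phi M ≤ (M i l * M k j) / (M i j * M k l) :=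
    csInf_le (phiSet_finite M).bddBelow hmem
  have h1 : 0 < M i j := lt_of_le_of_ne (hM i j) (Ne.symm (subrect_entry hsr hri hcj))
  have h2 : 0 < M k l := lt_of_le_of_ne (hM k l) (Ne.symm (subrect_entry hsr hrk hcl))
  rw [le_div_iff₀ (by positivity)] at hle
  linarith

lemma tau_nonneg {M : Matrix n n ℝ} (hne : M ≠ 0) : 0 ≤ tau M := by
  have h1 : Real.sqrt (phi M) ≤ 1 := by
    rw [show (1:ℝ) = Real.sqrt 1 from Real.sqrt_one.symm]
    exact Real.sqrt_le_sqrt (phi_le_one hne)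
  have h0 : 0 ≤ Real.sqrt (phi M) := Real.sqrt_nonneg _
  unfold tau
  apply div_nonneg <;> linarith

end Aux

section Main
variable {n : Type*} [Fintype n]

private lemma div_ratio_eq {a b c d : ℝ} (hb : b ≠ 0) (hc : c ≠ 0) (hd : d ≠ 0) :
    (a / b) / (c / d) = (a * d) / (b * c) := by
  field_simp

set_option maxHeartbeats 1600000 in
lemma stepB (M : Matrix n n ℝ) (hM : ∀ i j, 0 ≤ M i j) (hsr : Subrectangular M)
    (hMne : M ≠ 0) (u v : n → ℝ) (hu : ∀ i, 0 ≤ u i) (hv : ∀ i, 0 ≤ v i)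
    (hsupp : ∀ i, u i ≠ 0 ↔ v i ≠ 0)
    (huM : Matrix.vecMul u M ≠ 0) (hvM : Matrix.vecMul v M ≠ 0) :
    Real.log (sSup (RSet (Matrix.vecMul u M) (Matrix.vecMul v M)))
      ≤ tau M * Real.log (sSup (RSet u v)) := by
  classical
  set f := Real.sqrt (phi M) with hfdef
  have hφpos : 0 < phi M := phi_pos hM hsr hMne
  have hφ1 : phi M ≤ 1 := phi_le_one hMne
  have hf0 : 0 < f := Real.sqrt_pos.mpr hφpos
  have hf1 : f ≤ 1 := by
    rw [hfdef, show (1:ℝ) = Real.sqrt 1 from Real.sqrt_one.symm]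
    exact Real.sqrt_le_sqrt hφ1
  have hf2 : f^2 = phi M := Real.sq_sqrt hφpos.le
  have hune : u ≠ 0 := fun h => huM (by rw [h, Matrix.zero_vecMul])
  set D := sSup (RSet u v) with hDdef
  have hD1 : 1 ≤ D := one_le_sSup_rset hsupp hune
  set δ := Real.sqrt D with hδdef
  have hδ1 : 1 ≤ δ := by
    rw [hδdef, show (1:ℝ) = Real.sqrt 1 from Real.sqrt_one.symm]
    exact Real.sqrt_le_sqrt hD1
  have hδ2 : δ^2 = D := Real.sq_sqrt (by linarith)
  have hratio := ratio_le_sSup_rset hu hv hsupp hune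
  set S' : Finset n := Finset.univ.filter (fun i => u i ≠ 0 ∧ ∃ j, M i j ≠ 0) with hS'def
  have hmemS' : ∀ i, i ∈ S' ↔ (u i ≠ 0 ∧ ∃ j, M i j ≠ 0) := fun i => by
    simp [hS'def]
  have huS : ∀ jj, Matrix.vecMul u M jj = ∑ i ∈ S', u i * M i jj := by
    intro jj; rw [vecMul_apply_eq]
    refine (Finset.sum_subset (Finset.subset_univ S') ?_).symm
    intro i _ hiS
    by_cases hui : u i = 0
    · rw [hui, zero_mul]
    · have hrow : M i jj = 0 := by
        by_contra hMij
        exact hiS ((hmemS' i).mpr ⟨hui, jj, hMij⟩)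
      rw [hrow, mul_zero]
  have hvS : ∀ jj, Matrix.vecMul v M jj = ∑ i ∈ S', v i * M i jj := by
    intro jj; rw [vecMul_apply_eq]
    refine (Finset.sum_subset (Finset.subset_univ S') ?_).symm
    intro i _ hiS
    by_cases hvi : v i = 0
    · rw [hvi, zero_mul]
    · have hui : u i ≠ 0 := (hsupp i).mpr hvi
      have hrow : M i jj = 0 := by
        by_contra hMij
        exact hiS ((hmemS' i).mpr ⟨hui, jj, hMij⟩)
      rw [hrow, mul_zero]
  obtain ⟨j₀, hj₀⟩ := Function.ne_iff.mp huM
  rw [vecMul_apply_eq] at hj₀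
  obtain ⟨i₀, -, hi₀⟩ := Finset.exists_ne_zero_of_sum_ne_zero hj₀
  have hi₀S : i₀ ∈ S' := (hmemS' i₀).mpr
    ⟨fun h => hi₀ (by rw [h, zero_mul]), ⟨j₀, fun h => hi₀ (by rw [h, mul_zero])⟩⟩
  obtain ⟨k₀, hk₀S, hk₀min⟩ := S'.exists_min_image (fun i => u i / v i) ⟨i₀, hi₀S⟩
  have hSpos : ∀ i ∈ S', 0 < u i ∧ 0 < v i := by
    intro i hi
    obtain ⟨hui, -⟩ := (hmemS' i).mp hi
    exact ⟨lt_of_le_of_ne (hu i) (Ne.symm hui),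
      lt_of_le_of_ne (hv i) (Ne.symm ((hsupp i).mp hui))⟩
  set α := u k₀ / v k₀ with hαdef
  have hαpos : 0 < α := div_pos (hSpos k₀ hk₀S).1 (hSpos k₀ hk₀S).2
  have hlow : ∀ i ∈ S', α * v i ≤ u i := by
    intro i hi
    have h := hk₀min i hi
    rw [le_div_iff₀ (hSpos i hi).2] at h
    exact h
  have hhigh : ∀ i ∈ S', u i ≤ δ^2 * α * v i := by
    intro i hi
    have hvk : 0 < v k₀ := (hSpos k₀ hk₀S).2
    rw [← mul_le_mul_iff_left₀ hvk]
    calc u i * v k₀ ≤ D * (v i * u k₀) := hratio i k₀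
      _ = δ^2 * α * v i * v k₀ := by
          rw [hδ2, hαdef]; field_simp
  -- main two-column bound
  have hmain : ∀ j l, (∃ i, M i j ≠ 0) → (∃ i, M i l ≠ 0) →
      Matrix.vecMul u M j * Matrix.vecMul v M l * (1+δ*f)^2
        ≤ (δ+f)^2 * (Matrix.vecMul v M j * Matrix.vecMul u M l) := by
    intro j l hcj hcl
    set c : n → ℝ := fun i =>
      M i j * Matrix.vecMul v M l * (1+δ*f)^2 - (δ+f)^2 * (Matrix.vecMul v M j * M i l)
      with hcdef
    set Bs := S'.filter (fun i => 0 ≤ c i) with hBdef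
    set As := S'.filter (fun i => ¬ 0 ≤ c i) with hAdef
    set PA := ∑ i ∈ As, v i * M i j with hPA
    set PB := ∑ i ∈ Bs, v i * M i j with hPB
    set QA := ∑ i ∈ As, v i * M i l with hQA
    set QB := ∑ i ∈ Bs, v i * M i l with hQB
    have hPj : Matrix.vecMul v M j = PA + PB := by
      rw [hvS j, ← Finset.sum_filter_add_sum_filter_not S' (fun i => 0 ≤ c i)
        (fun i => v i * M i j)]
      ring
    have hQl : Matrix.vecMul v M l = QA + QB := by
      rw [hvS l, ← Finset.sum_filter_add_sum_filter_not S' (fun i => 0 ≤ c i)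
        (fun i => v i * M i l)]
      ring
    have hPAnn : 0 ≤ PA := Finset.sum_nonneg fun i _ => mul_nonneg (hv i) (hM i j)
    have hPBnn : 0 ≤ PB := Finset.sum_nonneg fun i _ => mul_nonneg (hv i) (hM i j)
    have hQAnn : 0 ≤ QA := Finset.sum_nonneg fun i _ => mul_nonneg (hv i) (hM i l)
    have hQBnn : 0 ≤ QB := Finset.sum_nonneg fun i _ => mul_nonneg (hv i) (hM i l)
    have hcross : f^2 * (PB * QA) ≤ PA * QB := by
      rw [hf2]
      have e1 : PB * QA = ∑ i ∈ Bs, ∑ k ∈ As, (v i * M i j) * (v k * M k l) :=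
        Finset.sum_mul_sum _ _ _ _
      have e2 : QB * PA = ∑ i ∈ Bs, ∑ k ∈ As, (v i * M i l) * (v k * M k j) :=
        Finset.sum_mul_sum _ _ _ _
      have e3 : phi M * (PB * QA)
          = ∑ i ∈ Bs, ∑ k ∈ As, phi M * ((v i * M i j) * (v k * M k l)) := by
        rw [e1, Finset.mul_sum]
        exact Finset.sum_congr rfl fun i _ => Finset.mul_sum _ _ _
      rw [e3, show PA * QB = QB * PA from mul_comm _ _, e2]
      apply Finset.sum_le_sum
      intro i hiB
      apply Finset.sum_le_sum
      intro k hkA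
      have hiS : i ∈ S' := Finset.filter_subset _ _ hiB
      have hkS : k ∈ S' := Finset.filter_subset _ _ hkA
      have hri : ∃ j', M i j' ≠ 0 := ((hmemS' i).mp hiS).2
      have hrk : ∃ j', M k j' ≠ 0 := ((hmemS' k).mp hkS).2
      have hent := phi_mul_le hM hsr hri hrk hcj hcl
      have hvik : 0 ≤ v i * v k := mul_nonneg (hv i) (hv k)
      calc phi M * ((v i * M i j) * (v k * M k l))
          = (v i * v k) * (phi M * (M i j * M k l)) := by ring
        _ ≤ (v i * v k) * (M i l * M k j) := mul_le_mul_of_nonneg_left hent hvik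
        _ = (v i * M i l) * (v k * M k j) := by ring
    have hpoly := polyIneq δ f PA PB QA QB hδ1 hf0 hf1 hPAnn hPBnn hQAnn hQBnn hcross
    -- sum manipulations
    have hsplit : ∀ (g : n → ℝ) (s : Finset n),
        ∑ i ∈ s, g i * c i
          = (∑ i ∈ s, g i * M i j) * Matrix.vecMul v M l * (1+δ*f)^2
            - (δ+f)^2 * (Matrix.vecMul v M j * (∑ i ∈ s, g i * M i l)) := by
      intro g s
      calc ∑ i ∈ s, g i * c i
          = ∑ i ∈ s, ((g i * M i j) * Matrix.vecMul v M l * (1+δ*f)^2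
              - (δ+f)^2 * (Matrix.vecMul v M j * (g i * M i l))) :=
            Finset.sum_congr rfl fun i _ => by simp only [hcdef]; ring
        _ = (∑ i ∈ s, g i * M i j) * Matrix.vecMul v M l * (1+δ*f)^2
            - (δ+f)^2 * (Matrix.vecMul v M j * (∑ i ∈ s, g i * M i l)) := by
            rw [Finset.sum_sub_distrib, ← Finset.sum_mul, ← Finset.sum_mul,
              ← Finset.mul_sum, ← Finset.mul_sum]
    have hFsum : ∑ i ∈ S', u i * c i
        = Matrix.vecMul u M j * Matrix.vecMul v M l * (1+δ*f)^2
          - (δ+f)^2 * (Matrix.vecMul v M j * Matrix.vecMul u M l) := by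
      rw [hsplit u S', ← huS j, ← huS l]
    have hBsum : ∑ i ∈ Bs, v i * c i
        = PB * Matrix.vecMul v M l * (1+δ*f)^2 - (δ+f)^2 * (Matrix.vecMul v M j * QB) := by
      rw [hsplit v Bs, hPB, hQB]
    have hAsum : ∑ i ∈ As, v i * c i
        = PA * Matrix.vecMul v M l * (1+δ*f)^2 - (δ+f)^2 * (Matrix.vecMul v M j * QA) := by
      rw [hsplit v As, hPA, hQA]
    have hsum : ∑ i ∈ S', u i * c i
        ≤ δ^2*α*(∑ i ∈ Bs, v i * c i) + α*(∑ i ∈ As, v i * c i) := by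
      rw [← Finset.sum_filter_add_sum_filter_not S' (fun i => 0 ≤ c i) (fun i => u i * c i)]
      have b1 : ∑ i ∈ Bs, u i * c i ≤ δ^2*α*(∑ i ∈ Bs, v i * c i) := by
        rw [Finset.mul_sum]
        apply Finset.sum_le_sum
        intro i hiB
        have hci : 0 ≤ c i := (Finset.mem_filter.mp hiB).2
        calc u i * c i ≤ (δ^2*α*v i) * c i :=
              mul_le_mul_of_nonneg_right (hhigh i (Finset.filter_subset _ _ hiB)) hci
          _ = δ^2*α*(v i * c i) := by ring
      have b2 : ∑ i ∈ As, u i * c i ≤ α*(∑ i ∈ As, v i * c i) := by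
        rw [Finset.mul_sum]
        apply Finset.sum_le_sum
        intro i hiA
        have hci : c i ≤ 0 := le_of_not_ge (Finset.mem_filter.mp hiA).2
        calc u i * c i ≤ (α*v i) * c i :=
              mul_le_mul_of_nonpos_right (hlow i (Finset.filter_subset _ _ hiA)) hci
          _ = α*(v i * c i) := by ring
      exact add_le_add b1 b2
    have hfinal : δ^2*α*(∑ i ∈ Bs, v i * c i) + α*(∑ i ∈ As, v i * c i) ≤ 0 := by
      rw [hBsum, hAsum, hPj, hQl]
      nlinarith [mul_le_mul_of_nonneg_left hpoly hαpos.le]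
    have := le_trans (le_of_eq hFsum.symm) (le_trans hsum hfinal)
    linarith
  -- from the two-column bound to the sSup bound
  have hsuppM : ∀ jj, Matrix.vecMul u M jj ≠ 0 ↔ Matrix.vecMul v M jj ≠ 0 := fun jj => by
    rw [supp_vecMul hM hsr hu huM jj, supp_vecMul hM hsr hv hvM jj]
  have hRne : (RSet (Matrix.vecMul u M) (Matrix.vecMul v M)).Nonempty :=
    ⟨1, one_mem_rset hsuppM huM⟩
  have hden : (0:ℝ) < 1 + δ*f := by positivity
  have hboundall : ∀ r ∈ RSet (Matrix.vecMul u M) (Matrix.vecMul v M),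
      r ≤ ((δ+f)/(1+δ*f))^2 := by
    rintro r ⟨j, hj, l, hl, rfl⟩
    have hcj : ∃ i, M i j ≠ 0 := (supp_vecMul hM hsr hu huM j).mp hj
    have hcl : ∃ i, M i l ≠ 0 := (supp_vecMul hM hsr hu huM l).mp hl
    have hvj : Matrix.vecMul v M j ≠ 0 := (hsuppM j).mp hj
    have hvl : Matrix.vecMul v M l ≠ 0 := (hsuppM l).mp hl
    have puj : 0 < Matrix.vecMul u M j :=
      lt_of_le_of_ne (vecMul_entry_nonneg hM hu j) (Ne.symm hj)
    have pul : 0 < Matrix.vecMul u M l :=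
      lt_of_le_of_ne (vecMul_entry_nonneg hM hu l) (Ne.symm hl)
    have pvj : 0 < Matrix.vecMul v M j :=
      lt_of_le_of_ne (vecMul_entry_nonneg hM hv j) (Ne.symm hvj)
    have pvl : 0 < Matrix.vecMul v M l :=
      lt_of_le_of_ne (vecMul_entry_nonneg hM hv l) (Ne.symm hvl)
    have h := hmain j l hcj hcl
    have key : (Matrix.vecMul u M j / Matrix.vecMul v M j)
        / (Matrix.vecMul u M l / Matrix.vecMul v M l)
        = (Matrix.vecMul u M j * Matrix.vecMul v M l)
          / (Matrix.vecMul v M j * Matrix.vecMul u M l) :=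
      div_ratio_eq pvj.ne' hl pvl.ne'
    rw [key, div_pow, div_le_div_iff₀ (by positivity) (by positivity)]
    linarith
  have hsup_le : sSup (RSet (Matrix.vecMul u M) (Matrix.vecMul v M)) ≤ ((δ+f)/(1+δ*f))^2 :=
    csSup_le hRne hboundall
  have hsup_pos : 0 < sSup (RSet (Matrix.vecMul u M) (Matrix.vecMul v M)) :=
    lt_of_lt_of_le one_pos (one_le_sSup_rset hsuppM huM)
  have htau : tau M = (1-f)/(1+f) := rfl
  calc Real.log (sSup (RSet (Matrix.vecMul u M) (Matrix.vecMul v M)))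
      ≤ Real.log (((δ+f)/(1+δ*f))^2) := Real.log_le_log hsup_pos hsup_le
    _ = 2 * Real.log ((δ+f)/(1+δ*f)) := by rw [Real.log_pow]; norm_num
    _ ≤ 2 * ((1-f)/(1+f) * Real.log δ) := by
        have := logRatioLe f δ hf0 hf1 hδ1
        linarith
    _ = (1-f)/(1+f) * Real.log (δ^2) := by rw [Real.log_pow]; push_cast; ring
    _ = tau M * Real.log D := by rw [hδ2, htau]

lemma stepA (T : Matrix n n ℝ) (hT : ∀ i j, 0 ≤ T i j)
    (z w : n → ℝ) (hz : ∀ i, 0 ≤ z i) (hw : ∀ i, 0 ≤ w i)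
    (hsupp : ∀ i, z i ≠ 0 ↔ w i ≠ 0) (hzne : z ≠ 0) (hwne : w ≠ 0)
    (hzT : 0 < ∑ j, |Matrix.vecMul z T j|) (hwT : 0 < ∑ j, |Matrix.vecMul w T j|) :
    Real.log ((∑ j, |Matrix.vecMul z T j|) / (∑ j, |Matrix.vecMul w T j|) *
      ((∑ j, |w j|) / (∑ j, |z j|))) ≤ Real.log (sSup (RSet z w)) := by
  have hzT0 : ∀ jj, 0 ≤ Matrix.vecMul z T jj := fun jj => vecMul_entry_nonneg hT hz jj
  have hwT0 : ∀ jj, 0 ≤ Matrix.vecMul w T jj := fun jj => vecMul_entry_nonneg hT hw jj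
  rw [show (∑ j, |Matrix.vecMul z T j|) = ∑ j, Matrix.vecMul z T j from
      Finset.sum_congr rfl fun j _ => abs_of_nonneg (hzT0 j),
    show (∑ j, |Matrix.vecMul w T j|) = ∑ j, Matrix.vecMul w T j from
      Finset.sum_congr rfl fun j _ => abs_of_nonneg (hwT0 j),
    show (∑ j, |w j|) = ∑ j, w j from Finset.sum_congr rfl fun j _ => abs_of_nonneg (hw j),
    show (∑ j, |z j|) = ∑ j, z j from Finset.sum_congr rfl fun j _ => abs_of_nonneg (hz j)] at *
  set Nz := ∑ j, Matrix.vecMul z T j with hNz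
  set Nw := ∑ j, Matrix.vecMul w T j with hNw
  have hSz : 0 < ∑ j, z j := by
    obtain ⟨i, hi⟩ := Function.ne_iff.mp hzne
    exact Finset.sum_pos' (fun i _ => hz i)
      ⟨i, Finset.mem_univ i, lt_of_le_of_ne (hz i) (Ne.symm hi)⟩
  have hSw : 0 < ∑ j, w j := by
    obtain ⟨i, hi⟩ := Function.ne_iff.mp hwne
    exact Finset.sum_pos' (fun i _ => hw i)
      ⟨i, Finset.mem_univ i, lt_of_le_of_ne (hw i) (Ne.symm hi)⟩
  set D := sSup (RSet z w) with hD
  have hD1 : 1 ≤ D := one_le_sSup_rset hsupp hzne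
  have hratio := ratio_le_sSup_rset hz hw hsupp hzne
  have hNz' : Nz = ∑ i, z i * (∑ j, T i j) := by
    rw [hNz]
    calc (∑ j, Matrix.vecMul z T j) = ∑ j, ∑ i, z i * T i j :=
          Finset.sum_congr rfl fun j _ => vecMul_apply_eq z T j
      _ = ∑ i, ∑ j, z i * T i j := Finset.sum_comm
      _ = ∑ i, z i * (∑ j, T i j) := Finset.sum_congr rfl fun i _ => (Finset.mul_sum _ _ _).symm
  have hNw' : Nw = ∑ i, w i * (∑ j, T i j) := by
    rw [hNw]
    calc (∑ j, Matrix.vecMul w T j) = ∑ j, ∑ i, w i * T i j :=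
          Finset.sum_congr rfl fun j _ => vecMul_apply_eq w T j
      _ = ∑ i, ∑ j, w i * T i j := Finset.sum_comm
      _ = ∑ i, w i * (∑ j, T i j) := Finset.sum_congr rfl fun i _ => (Finset.mul_sum _ _ _).symm
  have hkey : Nz * (∑ l, w l) ≤ D * (Nw * (∑ l, z l)) := by
    have e1 : Nz * (∑ l, w l) = ∑ i, ∑ l, (z i * (∑ j, T i j)) * w l := by
      rw [hNz', Finset.sum_mul_sum]
    have e2 : D * (Nw * (∑ l, z l)) = ∑ i, ∑ l, D * ((w i * (∑ j, T i j)) * z l) := by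
      rw [hNw', Finset.sum_mul_sum, Finset.mul_sum]
      exact Finset.sum_congr rfl fun i _ => Finset.mul_sum _ _ _
    rw [e1, e2]
    apply Finset.sum_le_sum
    intro i _
    apply Finset.sum_le_sum
    intro l _
    have ht : 0 ≤ ∑ j, T i j := Finset.sum_nonneg fun j _ => hT i j
    calc (z i * ∑ j, T i j) * w l = (∑ j, T i j) * (z i * w l) := by ring
      _ ≤ (∑ j, T i j) * (D * (w i * z l)) := mul_le_mul_of_nonneg_left (hratio i l) ht
      _ = D * ((w i * ∑ j, T i j) * z l) := by ring
  have hX : Nz / Nw * ((∑ j, w j) / (∑ j, z j)) = (Nz * ∑ j, w j) / (Nw * ∑ j, z j) :=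
    div_mul_div_comm _ _ _ _
  have hXD : Nz / Nw * ((∑ j, w j) / (∑ j, z j)) ≤ D := by
    rw [hX, div_le_iff₀ (by positivity)]
    linarith [hkey]
  have hXpos : 0 < Nz / Nw * ((∑ j, w j) / (∑ j, z j)) := by positivity
  exact Real.log_le_log hXpos hXD

variable [DecidableEq n]

lemma prodSeq_succ (M : ℕ → Matrix n n ℝ) (s : ℕ) :
    prodSeq M (s+1) = prodSeq M s * M (s+1) := by
  unfold prodSeq
  rw [List.range_succ, List.map_append, List.prod_append]
  simp

lemma prodSeq_one (M : ℕ → Matrix n n ℝ) : prodSeq M 1 = M 1 := by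
  have h0 : prodSeq M 0 = 1 := rfl
  rw [show (1:ℕ) = 0 + 1 from rfl, prodSeq_succ, h0, one_mul]

lemma prodSeq_entry_nonneg {M : ℕ → Matrix n n ℝ} {m : ℕ}
    (hMpos : ∀ ℓ, 1 ≤ ℓ → ℓ ≤ m → ∀ i j, 0 ≤ M ℓ i j) :
    ∀ s, s ≤ m → ∀ i j, 0 ≤ prodSeq M s i j := by
  intro s
  induction s with
  | zero =>
    intro _ i j
    unfold prodSeq
    simp only [List.range_zero, List.map_nil, List.prod_nil]
    by_cases h : i = j <;> simp [Matrix.one_apply, h]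
  | succ t ih =>
    intro hsm i j
    rw [prodSeq_succ, Matrix.mul_apply]
    exact Finset.sum_nonneg fun k _ =>
      mul_nonneg (ih (by omega) i k) (hMpos (t+1) (by omega) hsm k j)

lemma vecMul_prodSeq_succ (x : n → ℝ) (M : ℕ → Matrix n n ℝ) (s : ℕ) :
    Matrix.vecMul x (prodSeq M (s+1))
      = Matrix.vecMul (Matrix.vecMul x (prodSeq M s)) (M (s+1)) := by
  rw [prodSeq_succ]
  exact (Matrix.vecMul_vecMul _ _ _).symm

lemma vecMul_prodSeq_ne {x : n → ℝ} {M : ℕ → Matrix n n ℝ} {ℓ s : ℕ} (h : ℓ ≤ s)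
    (hs : Matrix.vecMul x (prodSeq M s) ≠ 0) : Matrix.vecMul x (prodSeq M ℓ) ≠ 0 := by
  intro h0
  apply hs
  clear hs
  induction s, h using Nat.le_induction with
  | base => exact h0
  | succ t ht ih => rw [vecMul_prodSeq_succ, ih, Matrix.zero_vecMul]

lemma chainBound (m : ℕ) (M : ℕ → Matrix n n ℝ)
    (hMpos : ∀ ℓ, 1 ≤ ℓ → ℓ ≤ m → ∀ i j, 0 ≤ M ℓ i j)
    (hMne : ∀ ℓ, 1 ≤ ℓ → ℓ ≤ m → M ℓ ≠ 0)
    (hMsr : ∀ ℓ, 1 ≤ ℓ → ℓ ≤ m → Subrectangular (M ℓ))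
    (x y : n → ℝ) (hx : ∀ i, 0 ≤ x i) (hy : ∀ i, 0 ≤ y i)
    (hxm : Matrix.vecMul x (prodSeq M m) ≠ 0) (hym : Matrix.vecMul y (prodSeq M m) ≠ 0) :
    ∀ s, 1 ≤ s → s ≤ m →
      Real.log (sSup (RSet (Matrix.vecMul x (prodSeq M s)) (Matrix.vecMul y (prodSeq M s))))
        ≤ (∏ ℓ ∈ Finset.Icc 2 s, tau (M ℓ)) *
          Real.log (sSup (RSet (Matrix.vecMul x (M 1)) (Matrix.vecMul y (M 1)))) := by
  have hzne : ∀ s, s ≤ m → Matrix.vecMul x (prodSeq M s) ≠ 0 :=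
    fun s hs => vecMul_prodSeq_ne hs hxm
  have hwne : ∀ s, s ≤ m → Matrix.vecMul y (prodSeq M s) ≠ 0 :=
    fun s hs => vecMul_prodSeq_ne hs hym
  have hznn : ∀ s, s ≤ m → ∀ i, 0 ≤ Matrix.vecMul x (prodSeq M s) i :=
    fun s hs i => vecMul_entry_nonneg (prodSeq_entry_nonneg hMpos s hs) hx i
  have hwnn : ∀ s, s ≤ m → ∀ i, 0 ≤ Matrix.vecMul y (prodSeq M s) i :=
    fun s hs i => vecMul_entry_nonneg (prodSeq_entry_nonneg hMpos s hs) hy i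
  have hsuppZ : ∀ s, 1 ≤ s → s ≤ m → ∀ i,
      (Matrix.vecMul x (prodSeq M s) i ≠ 0 ↔ Matrix.vecMul y (prodSeq M s) i ≠ 0) := by
    intro s hs1 hsm i
    obtain ⟨t, rfl⟩ : ∃ t, s = t+1 := ⟨s-1, by omega⟩
    have hxne' : Matrix.vecMul (Matrix.vecMul x (prodSeq M t)) (M (t+1)) ≠ 0 := by
      rw [← vecMul_prodSeq_succ]; exact hzne (t+1) hsm
    have hyne' : Matrix.vecMul (Matrix.vecMul y (prodSeq M t)) (M (t+1)) ≠ 0 := by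
      rw [← vecMul_prodSeq_succ]; exact hwne (t+1) hsm
    rw [vecMul_prodSeq_succ x M t, vecMul_prodSeq_succ y M t,
      supp_vecMul (hMpos (t+1) (by omega) hsm) (hMsr (t+1) (by omega) hsm)
        (hznn t (by omega)) hxne' i,
      supp_vecMul (hMpos (t+1) (by omega) hsm) (hMsr (t+1) (by omega) hsm)
        (hwnn t (by omega)) hyne' i]
  intro s
  induction s with
  | zero => omega
  | succ t ih =>
    intro _ hsm
    rcases Nat.eq_zero_or_pos t with rfl | ht
    · rw [prodSeq_one, show Finset.Icc 2 1 = ∅ from rfl]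
      simp
    · have IH := ih (by omega) (by omega)
      have hxne' : Matrix.vecMul (Matrix.vecMul x (prodSeq M t)) (M (t+1)) ≠ 0 := by
        rw [← vecMul_prodSeq_succ]; exact hzne (t+1) hsm
      have hyne' : Matrix.vecMul (Matrix.vecMul y (prodSeq M t)) (M (t+1)) ≠ 0 := by
        rw [← vecMul_prodSeq_succ]; exact hwne (t+1) hsm
      have hstep := stepB (M (t+1)) (hMpos (t+1) (by omega) hsm) (hMsr (t+1) (by omega) hsm)
        (hMne (t+1) (by omega) hsm) (Matrix.vecMul x (prodSeq M t))
        (Matrix.vecMul y (prodSeq M t)) (hznn t (by omega)) (hwnn t (by omega))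
        (hsuppZ t (by omega) (by omega)) hxne' hyne'
      rw [← vecMul_prodSeq_succ x M t, ← vecMul_prodSeq_succ y M t] at hstep
      calc Real.log (sSup (RSet (Matrix.vecMul x (prodSeq M (t+1)))
              (Matrix.vecMul y (prodSeq M (t+1)))))
          ≤ tau (M (t+1)) * Real.log (sSup (RSet (Matrix.vecMul x (prodSeq M t))
              (Matrix.vecMul y (prodSeq M t)))) := hstep
        _ ≤ tau (M (t+1)) * ((∏ ℓ ∈ Finset.Icc 2 t, tau (M ℓ)) *
              Real.log (sSup (RSet (Matrix.vecMul x (M 1)) (Matrix.vecMul y (M 1))))) :=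
            mul_le_mul_of_nonneg_left IH (tau_nonneg (hMne (t+1) (by omega) hsm))
        _ = (∏ ℓ ∈ Finset.Icc 2 (t+1), tau (M ℓ)) *
              Real.log (sSup (RSet (Matrix.vecMul x (M 1)) (Matrix.vecMul y (M 1)))) := by
            rw [Finset.prod_Icc_succ_top (by omega : 2 ≤ t+1)]
            ring

end Main

/-- (Proposition: generalized Hochwald–Jelenković inequality.) -/
theorem stmt_11 {n : Type*} [Fintype n] [DecidableEq n]
    (m : ℕ) (hm : 1 ≤ m)
    (M : ℕ → Matrix n n ℝ) (T : Matrix n n ℝ)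
    (hMpos : ∀ ℓ, 1 ≤ ℓ → ℓ ≤ m → ∀ i j, 0 ≤ M ℓ i j)
    (hMne : ∀ ℓ, 1 ≤ ℓ → ℓ ≤ m → M ℓ ≠ 0)
    (hMsr : ∀ ℓ, 1 ≤ ℓ → ℓ ≤ m → Subrectangular (M ℓ))
    (hTpos : ∀ i j, 0 ≤ T i j) (hTne : T ≠ 0)
    (x y : n → ℝ) (hx : ∀ i, 0 ≤ x i) (hy : ∀ i, 0 ≤ y i)
    (hxne : x ≠ 0) (hyne : y ≠ 0)
    (hx1 : 0 < ∑ j, |Matrix.vecMul x (prodSeq M m * T) j|)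
    (hy1 : 0 < ∑ j, |Matrix.vecMul y (prodSeq M m * T) j|) :
    Real.log
        ((∑ j, |Matrix.vecMul x (prodSeq M m * T) j|) /
            (∑ j, |Matrix.vecMul y (prodSeq M m * T) j|) *
          ((∑ j, |Matrix.vecMul y (prodSeq M m) j|) /
            (∑ j, |Matrix.vecMul x (prodSeq M m) j|))) ≤
      projDist (Matrix.vecMul x (M 1)) (Matrix.vecMul y (M 1)) *
        ∏ ℓ ∈ Finset.Icc 2 m, tau (M ℓ) := by
  classical
  have ex : Matrix.vecMul x (prodSeq M m * T) = Matrix.vecMul (Matrix.vecMul x (prodSeq M m)) T :=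
    (Matrix.vecMul_vecMul _ _ _).symm
  have ey : Matrix.vecMul y (prodSeq M m * T) = Matrix.vecMul (Matrix.vecMul y (prodSeq M m)) T :=
    (Matrix.vecMul_vecMul _ _ _).symm
  rw [ex] at hx1 ⊢
  rw [ey] at hy1 ⊢
  have hxTne : Matrix.vecMul (Matrix.vecMul x (prodSeq M m)) T ≠ 0 := by
    intro h
    rw [h] at hx1
    simp at hx1
  have hyTne : Matrix.vecMul (Matrix.vecMul y (prodSeq M m)) T ≠ 0 := by
    intro h
    rw [h] at hy1
    simp at hy1
  have hxm : Matrix.vecMul x (prodSeq M m) ≠ 0 := by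
    intro h
    rw [h, Matrix.zero_vecMul] at hxTne
    exact hxTne rfl
  have hym : Matrix.vecMul y (prodSeq M m) ≠ 0 := by
    intro h
    rw [h, Matrix.zero_vecMul] at hyTne
    exact hyTne rfl
  have hznn : ∀ i, 0 ≤ Matrix.vecMul x (prodSeq M m) i :=
    fun i => vecMul_entry_nonneg (prodSeq_entry_nonneg hMpos m le_rfl) hx i
  have hwnn : ∀ i, 0 ≤ Matrix.vecMul y (prodSeq M m) i :=
    fun i => vecMul_entry_nonneg (prodSeq_entry_nonneg hMpos m le_rfl) hy i
  have hsuppm : ∀ i, Matrix.vecMul x (prodSeq M m) i ≠ 0 ↔ Matrix.vecMul y (prodSeq M m) i ≠ 0 := by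
    intro i
    obtain ⟨t, rfl⟩ : ∃ t, m = t+1 := ⟨m-1, by omega⟩
    have hxne' : Matrix.vecMul (Matrix.vecMul x (prodSeq M t)) (M (t+1)) ≠ 0 := by
      rw [← vecMul_prodSeq_succ]; exact hxm
    have hyne' : Matrix.vecMul (Matrix.vecMul y (prodSeq M t)) (M (t+1)) ≠ 0 := by
      rw [← vecMul_prodSeq_succ]; exact hym
    rw [vecMul_prodSeq_succ x M t, vecMul_prodSeq_succ y M t,
      supp_vecMul (hMpos (t+1) (by omega) le_rfl) (hMsr (t+1) (by omega) le_rfl)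
        (fun i => vecMul_entry_nonneg (prodSeq_entry_nonneg hMpos t (by omega)) hx i) hxne' i,
      supp_vecMul (hMpos (t+1) (by omega) le_rfl) (hMsr (t+1) (by omega) le_rfl)
        (fun i => vecMul_entry_nonneg (prodSeq_entry_nonneg hMpos t (by omega)) hy i) hyne' i]
  have hA := stepA T hTpos (Matrix.vecMul x (prodSeq M m)) (Matrix.vecMul y (prodSeq M m))
    hznn hwnn hsuppm hxm hym hx1 hy1
  have hC := chainBound m M hMpos hMne hMsr x y hx hy hxm hym m hm le_rfl
  rw [projDist_eq]
  calc Real.log ((∑ j, |Matrix.vecMul (Matrix.vecMul x (prodSeq M m)) T j|) /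
          (∑ j, |Matrix.vecMul (Matrix.vecMul y (prodSeq M m)) T j|) *
        ((∑ j, |Matrix.vecMul y (prodSeq M m) j|) / (∑ j, |Matrix.vecMul x (prodSeq M m) j|)))
      ≤ Real.log (sSup (RSet (Matrix.vecMul x (prodSeq M m)) (Matrix.vecMul y (prodSeq M m)))) := hA
    _ ≤ (∏ ℓ ∈ Finset.Icc 2 m, tau (M ℓ)) *
          Real.log (sSup (RSet (Matrix.vecMul x (M 1)) (Matrix.vecMul y (M 1)))) := hC
    _ = Real.log (sSup (RSet (Matrix.vecMul x (M 1)) (Matrix.vecMul y (M 1)))) *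
          ∏ ℓ ∈ Finset.Icc 2 m, tau (M ℓ) := mul_comm _ _
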